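/- Let K be a finite, pure, strongly connected simplicial complex of dimension n. Then 1 is an eigenvalue of the top down discriminant D_n^down (i.e. there is a nonzero g ∈ ℓ²(K_n) with D_n^down g = g) if and only if K is totally non-coherently orientable. -/

import Mathlib

open scoped BigOperators

/-- The set of oriented `q`-simplices of a simplicial complex, together with the
orientation-reversal involution `bar` (writing `τ̄` for `bar τ`). -/
structure OrientedSet where
  K : Type
  bar : K → K
  bar_invol : ∀ τ, bar (bar τ) = τ
  bar_ne : ∀ τ, bar τ ≠ τ

/-- The data of an up graph (`mult = 2(q+1)`) or a down graph (`mult = 2`) on the set of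
oriented `q`-simplices: the sign function `η` (extended by `0` off the edge set, so that
`(τ₁, τ₂)` is an edge iff `eta τ₁ τ₂ ≠ 0`), the degree function (`deg_X`, resp. `deg_Y`),
and local finiteness; the degree of a vertex `τ` in the graph is `mult * deg τ`. -/
structure GroverStructure (O : OrientedSet) where
  eta : O.K → O.K → ℝ
  eta_symm : ∀ τ₁ τ₂, eta τ₁ τ₂ = eta τ₂ τ₁
  eta_vals : ∀ τ₁ τ₂, eta τ₁ τ₂ = 0 ∨ eta τ₁ τ₂ = 1 ∨ eta τ₁ τ₂ = -1
  eta_bar_left : ∀ τ₁ τ₂, eta (O.bar τ₁) τ₂ = - eta τ₁ τ₂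
  eta_self : ∀ τ, eta τ τ = 0
  eta_bar_self : ∀ τ, eta τ (O.bar τ) = 0
  deg : O.K → ℕ
  deg_pos : ∀ τ, 0 < deg τ
  deg_bar : ∀ τ, deg (O.bar τ) = deg τ
  mult : ℕ
  nbhdFinite : ∀ τ, {τ' | eta τ τ' ≠ 0}.Finite
  nbhd_card : ∀ τ, (nbhdFinite τ).toFinset.card = mult * deg τ

namespace GroverStructure

variable {O : OrientedSet} (Y : GroverStructure O)

/-- `(τ₁, τ₂)` is an oriented edge of the up/down graph. -/
def Edge (τ₁ τ₂ : O.K) : Prop := Y.eta τ₁ τ₂ ≠ 0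

/-- The normalization constant `(mult * deg τ)^(-1/2)`. -/
noncomputable def c (τ : O.K) : ℂ := ((Real.sqrt (Y.mult * Y.deg τ) : ℝ) : ℂ)⁻¹

/-- The operator `d : ℓ²(E) → ℓ²(K)`; elements of `ℓ²(E)` are represented as
functions on `K × K` (supported on the set of edges). -/
noncomputable def d (g : O.K × O.K → ℂ) : O.K → ℂ :=
  fun τ => Y.c τ * ∑ᶠ τ' ∈ {τ' | Y.eta τ τ' ≠ 0}, g (τ, τ')

/-- The adjoint `d* : ℓ²(K) → ℓ²(E)`. -/
noncomputable def dstar (f : O.K → ℂ) : O.K × O.K → ℂ :=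
  fun p => if Y.eta p.1 p.2 ≠ 0 then Y.c p.1 * f p.1 else 0

/-- The shift operator `(S g)(τ₁,τ₂) = η(τ₁,τ₂) • g(τ₂,τ₁)`. -/
noncomputable def shift (g : O.K × O.K → ℂ) : O.K × O.K → ℂ :=
  fun p => (Y.eta p.1 p.2 : ℂ) * g (p.2, p.1)

/-- The discriminant operator `D = d ∘ S ∘ d*`. -/
noncomputable def disc (f : O.K → ℂ) : O.K → ℂ := Y.d (Y.shift (Y.dstar f))

/-- The Grover walk `U = S (2 d* d − I)`. -/
noncomputable def walk (g : O.K × O.K → ℂ) : O.K × O.K → ℂ :=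
  Y.shift (fun p => 2 * Y.dstar (Y.d g) p - g p)

/-- Membership in `ℓ²(E)`: square summable and supported on the edge set. -/
def MemEdge (g : O.K × O.K → ℂ) : Prop :=
  Memℓp g 2 ∧ ∀ p : O.K × O.K, ¬ Y.Edge p.1 p.2 → g p = 0

end GroverStructure

/-- The orthogonal projection of `ℓ²(K_q)` onto the cochain space
`C^q(K,ℂ) = {f : f(τ̄) = -f(τ)}`. -/
noncomputable def projC (O : OrientedSet) (f : O.K → ℂ) : O.K → ℂ :=
  fun τ => (f τ - f (O.bar τ)) / 2

/-- The incidence signs `sgn(σ,τ)` between oriented simplices of two consecutive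
dimensions (`Olow` models `K_q`, `Ohigh` models `K_{q+1}`): `sgn σ τ ∈ {±1}` if the
underlying simplex `[τ]` is a face of `[σ]`, and `sgn σ τ = 0` otherwise. -/
structure SgnPair (Olow Ohigh : OrientedSet) where
  sgn : Ohigh.K → Olow.K → ℝ
  sgn_vals : ∀ σ τ, sgn σ τ = 0 ∨ sgn σ τ = 1 ∨ sgn σ τ = -1
  sgn_bar_left : ∀ σ τ, sgn (Ohigh.bar σ) τ = - sgn σ τ
  sgn_bar_right : ∀ σ τ, sgn σ (Olow.bar τ) = - sgn σ τ
  facesFinite : ∀ σ, {τ | sgn σ τ ≠ 0}.Finite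
  cofacesFinite : ∀ τ, {σ | sgn σ τ ≠ 0}.Finite

namespace SgnPair

variable {Olow Ohigh : OrientedSet} (P : SgnPair Olow Ohigh)

/-- The coboundary operator `(δ_q f)(σ) = (1/2) ∑_{τ ∈ K_q} sgn(σ,τ) f(τ)`. -/
noncomputable def delta (f : Olow.K → ℂ) : Ohigh.K → ℂ :=
  fun σ => (1 / 2 : ℂ) * ∑ᶠ τ, (P.sgn σ τ : ℂ) * f τ

/-- The adjoint coboundary `(δ_q* g)(τ) = (1/2) ∑_{σ ∈ K_{q+1}} sgn(σ,τ) g(σ)`. -/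
noncomputable def deltaStar (g : Ohigh.K → ℂ) : Olow.K → ℂ :=
  fun τ => (1 / 2 : ℂ) * ∑ᶠ σ, (P.sgn σ τ : ℂ) * g σ

end SgnPair

/-- The Grover structure `X` is the up graph structure at level `q` induced by the
incidence signs into level `q+1`: two oriented `q`-simplices span an edge iff their
underlying simplices are distinct up neighbors, `η^up(τ₁,τ₂) = sgn(σ,τ₁)·sgn(σ,τ₂)`
for (either orientation of) the common `(q+1)`-simplex `σ`, and `deg_X τ` is the number
of `(q+1)`-simplices containing `[τ]` as a face (each such simplex having exactly two
orientations). -/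
def GroverStructure.IsUpOf {O Oup : OrientedSet} (X : GroverStructure O)
    (P : SgnPair O Oup) : Prop :=
  (∀ τ₁ τ₂ : O.K, X.eta τ₁ τ₂ ≠ 0 ↔
      τ₁ ≠ τ₂ ∧ τ₁ ≠ O.bar τ₂ ∧ ∃ σ, P.sgn σ τ₁ ≠ 0 ∧ P.sgn σ τ₂ ≠ 0) ∧
  (∀ τ₁ τ₂ σ, τ₁ ≠ τ₂ → τ₁ ≠ O.bar τ₂ → P.sgn σ τ₁ ≠ 0 → P.sgn σ τ₂ ≠ 0 →
      X.eta τ₁ τ₂ = P.sgn σ τ₁ * P.sgn σ τ₂) ∧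
  (∀ τ, (P.cofacesFinite τ).toFinset.card = 2 * X.deg τ)

/-- The Grover structure `Y` is the down graph structure at level `q+1` induced by the
incidence signs from level `q`: two oriented `(q+1)`-simplices span an edge iff their
underlying simplices are distinct down neighbors, and
`η^down(σ₁,σ₂) = sgn(σ₁,μ)·sgn(σ₂,μ)` for (either orientation of) a common face `μ`. -/
def GroverStructure.IsDownOf {Odn O : OrientedSet} (Y : GroverStructure O)
    (P : SgnPair Odn O) : Prop :=
  (∀ σ₁ σ₂ : O.K, Y.eta σ₁ σ₂ ≠ 0 ↔
      σ₁ ≠ σ₂ ∧ σ₁ ≠ O.bar σ₂ ∧ ∃ μ, P.sgn σ₁ μ ≠ 0 ∧ P.sgn σ₂ μ ≠ 0) ∧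
  (∀ σ₁ σ₂ μ, σ₁ ≠ σ₂ → σ₁ ≠ O.bar σ₂ → P.sgn σ₁ μ ≠ 0 → P.sgn σ₂ μ ≠ 0 →
      Y.eta σ₁ σ₂ = P.sgn σ₁ μ * P.sgn σ₂ μ)

/-- `A ⊆ K_n` is an orientation: it contains exactly one of `σ`, `σ̄` for each `σ`. -/
def OrientedSet.IsOrientation (O : OrientedSet) (A : Set O.K) : Prop :=
  ∀ τ, τ ∈ A ↔ O.bar τ ∉ A

/-- `K` is coherently orientable: there is an orientation `K_n^o` such that
`sgn(σ₁,τ)·sgn(σ₂,τ) = −1` for any two down-neighboring `σ₁, σ₂ ∈ K_n^o`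
with common `(n−1)`-face `τ`. -/
def SgnPair.CoherentlyOrientable {Odn O : OrientedSet} (P : SgnPair Odn O) : Prop :=
  ∃ A : Set O.K, O.IsOrientation A ∧
    ∀ σ₁ ∈ A, ∀ σ₂ ∈ A, σ₁ ≠ σ₂ → σ₁ ≠ O.bar σ₂ →
      ∀ μ, P.sgn σ₁ μ ≠ 0 → P.sgn σ₂ μ ≠ 0 → P.sgn σ₁ μ * P.sgn σ₂ μ = -1

/-- `K` is totally non-coherently orientable: there is an orientation `K_n^o` such that
`sgn(σ₁,τ)·sgn(σ₂,τ) = 1` for any two down-neighboring `σ₁, σ₂ ∈ K_n^o`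
with common `(n−1)`-face `τ`. -/
def SgnPair.TotallyNonCoherentlyOrientable {Odn O : OrientedSet} (P : SgnPair Odn O) : Prop :=
  ∃ A : Set O.K, O.IsOrientation A ∧
    ∀ σ₁ ∈ A, ∀ σ₂ ∈ A, σ₁ ≠ σ₂ → σ₁ ≠ O.bar σ₂ →
      ∀ μ, P.sgn σ₁ μ ≠ 0 → P.sgn σ₂ μ ≠ 0 → P.sgn σ₁ μ * P.sgn σ₂ μ = 1


section AuxiliaryLemmas

open Finset in
private lemma max_principle {ι : Type*} (s : Finset ι) (z : ι → ℂ) (w : ℂ)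
    (hbound : ∀ i ∈ s, ‖z i‖ ≤ ‖w‖)
    (hsum : (s.card : ℂ) * w = ∑ i ∈ s, z i) :
    ∀ i ∈ s, z i = w := by
  have hle : ∀ i ∈ s, (z i * (starRingEnd ℂ) w).re ≤ Complex.normSq w := by
    intro i hi
    calc (z i * (starRingEnd ℂ) w).re ≤ ‖z i * (starRingEnd ℂ) w‖ :=
          Complex.re_le_norm _
      _ = ‖z i‖ * ‖w‖ := by
          rw [norm_mul, Complex.norm_conj]
      _ ≤ ‖w‖ * ‖w‖ :=
          mul_le_mul_of_nonneg_right (hbound i hi) (norm_nonneg _)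
      _ = Complex.normSq w := by rw [← Complex.sq_norm, sq]
  have hsum' : ∑ i ∈ s, (z i * (starRingEnd ℂ) w).re = ∑ i ∈ s, Complex.normSq w := by
    have : (∑ i ∈ s, z i * (starRingEnd ℂ) w).re
        = ((s.card : ℂ) * w * (starRingEnd ℂ) w).re := by
      rw [← Finset.sum_mul, ← hsum]
    rw [Complex.re_sum] at this
    rw [this, Finset.sum_const, nsmul_eq_mul, mul_assoc, Complex.mul_conj]
    simp
  have heq := (Finset.sum_eq_sum_iff_of_le hle).mp hsum'
  intro i hi
  have h1 : (z i * (starRingEnd ℂ) w).re = Complex.normSq w := heq i hi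
  have h2 : Complex.normSq (z i - w) ≤ 0 := by
    rw [Complex.normSq_sub, h1]
    have : Complex.normSq (z i) ≤ Complex.normSq w := by
      rw [← Complex.sq_norm, ← Complex.sq_norm]
      exact pow_le_pow_left₀ (norm_nonneg _) (hbound i hi) 2
    linarith
  have h3 := le_antisymm h2 (Complex.normSq_nonneg _)
  exact sub_eq_zero.mp (Complex.normSq_eq_zero.mp h3)

private lemma disc_apply' {O : OrientedSet} (Y : GroverStructure O) (f : O.K → ℂ) (τ : O.K) :
    Y.disc f τ = Y.c τ * ∑ τ' ∈ (Y.nbhdFinite τ).toFinset,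
      (Y.eta τ τ' : ℂ) * (Y.c τ' * f τ') := by
  show Y.c τ * ∑ᶠ τ' ∈ {τ' | Y.eta τ τ' ≠ 0}, Y.shift (Y.dstar f) (τ, τ') = _
  congr 1
  rw [← finsum_mem_coe_finset, (Y.nbhdFinite τ).coe_toFinset]
  refine finsum_mem_congr rfl fun τ' hτ' => ?_
  rw [Set.mem_setOf_eq] at hτ'
  have h : Y.eta τ' τ ≠ 0 := by rw [Y.eta_symm]; exact hτ'
  simp [GroverStructure.shift, GroverStructure.dstar, h]

end AuxiliaryLemmas

/-- For a finite, pure, strongly connected `n`-dimensional complex,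
`1` is an eigenvalue of the top down discriminant `D_n^down` if and only if `K` is
totally non-coherently orientable. -/
theorem eigenvalue_one_iff_totally_non_coherently_orientable
    (Odn O : OrientedSet) [Finite Odn.K] [Finite O.K] (hne : Nonempty O.K)
    (P : SgnPair Odn O)
    (Y : GroverStructure O) (hYm : Y.mult = 2) (hY : Y.IsDownOf P)
    (hconn : ∀ σ σ' : O.K, σ' ≠ σ → σ' ≠ O.bar σ →
      Relation.ReflTransGen (fun a b => Y.eta a b ≠ 0) σ σ') :
    (∃ g : O.K → ℂ, g ≠ 0 ∧ Y.disc g = g) ↔ P.TotallyNonCoherentlyOrientable := by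
  classical
  have hxpos : ∀ τ : O.K, (0:ℝ) < (Y.mult : ℝ) * (Y.deg τ : ℝ) := by
    intro τ
    have h1 : (0:ℝ) < (Y.mult : ℝ) := by rw [hYm]; norm_num
    have h2 : (0:ℝ) < (Y.deg τ : ℝ) := by exact_mod_cast Y.deg_pos τ
    exact mul_pos h1 h2
  have hrpos : ∀ τ : O.K, 0 < Real.sqrt ((Y.mult : ℝ) * (Y.deg τ : ℝ)) :=
    fun τ => Real.sqrt_pos.mpr (hxpos τ)
  have hrC : ∀ τ : O.K, ((Real.sqrt ((Y.mult : ℝ) * (Y.deg τ : ℝ)) : ℝ) : ℂ) ≠ 0 :=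
    fun τ => Complex.ofReal_ne_zero.mpr (ne_of_gt (hrpos τ))
  have hcdef : ∀ τ : O.K,
      Y.c τ = ((Real.sqrt ((Y.mult:ℝ) * (Y.deg τ:ℝ)) : ℝ) : ℂ)⁻¹ := fun τ => rfl
  have hcne : ∀ τ : O.K, Y.c τ ≠ 0 := fun τ => by rw [hcdef]; exact inv_ne_zero (hrC τ)
  have hrr : ∀ τ : O.K, ((Real.sqrt ((Y.mult:ℝ) * (Y.deg τ:ℝ)) : ℝ) : ℂ)
      * ((Real.sqrt ((Y.mult:ℝ) * (Y.deg τ:ℝ)) : ℝ) : ℂ)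
      = (((Y.mult:ℝ) * (Y.deg τ:ℝ) : ℝ) : ℂ) := by
    intro τ
    rw [← Complex.ofReal_mul, Real.mul_self_sqrt (hxpos τ).le]
  have hcardC : ∀ τ : O.K, (((Y.nbhdFinite τ).toFinset.card : ℕ) : ℂ)
      = (((Y.mult:ℝ) * (Y.deg τ:ℝ) : ℝ) : ℂ) := by
    intro τ; rw [Y.nbhd_card τ]; push_cast; ring
  have hetaabs : ∀ a b : O.K, Y.eta a b ≠ 0 → ‖(Y.eta a b : ℂ)‖ = 1 := by
    intro a b h
    rcases Y.eta_vals a b with h'|h'|h'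
    · exact absurd h' h
    · rw [h']; simp
    · rw [h']; simp
  constructor
  · rintro ⟨f, hf0, hff⟩
    set g : O.K → ℂ := fun τ => Y.c τ * f τ with hgdef
    have hkey : ∀ τ : O.K, (((Y.nbhdFinite τ).toFinset.card : ℕ) : ℂ) * g τ
        = ∑ τ' ∈ (Y.nbhdFinite τ).toFinset, (Y.eta τ τ' : ℂ) * g τ' := by
      intro τ
      have hf : f τ = Y.c τ * ∑ τ' ∈ (Y.nbhdFinite τ).toFinset,
          (Y.eta τ τ' : ℂ) * g τ' := by
        conv_lhs => rw [← hff]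
        exact disc_apply' Y f τ
      have hgτ : g τ = Y.c τ * f τ := rfl
      rw [hgτ, hf, hcardC, ← mul_assoc, ← mul_assoc]
      have h1 : (((Y.mult:ℝ)*(Y.deg τ:ℝ) : ℝ):ℂ) * Y.c τ * Y.c τ = 1 := by
        rw [hcdef, ← hrr τ, mul_assoc, ← mul_inv,
          mul_inv_cancel₀ (mul_ne_zero (hrC τ) (hrC τ))]
      rw [h1, one_mul]
    have hNbar : ∀ τ : O.K, (Y.nbhdFinite (O.bar τ)).toFinset
        = (Y.nbhdFinite τ).toFinset := by
      intro τ
      ext τ'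
      simp only [Set.Finite.mem_toFinset, Set.mem_setOf_eq, Y.eta_bar_left, neg_ne_zero]
    have hcbar : ∀ τ : O.K, Y.c (O.bar τ) = Y.c τ := by
      intro τ; unfold GroverStructure.c; rw [Y.deg_bar]
    have hfbar : ∀ τ : O.K, f (O.bar τ) = - f τ := by
      intro τ
      conv_lhs => rw [← hff]
      conv_rhs => rw [← hff]
      rw [disc_apply', disc_apply', hNbar, hcbar, ← mul_neg]
      congr 1
      rw [← Finset.sum_neg_distrib]
      refine Finset.sum_congr rfl fun τ' _ => ?_
      rw [Y.eta_bar_left]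
      push_cast
      ring
    have hgbar : ∀ τ : O.K, g (O.bar τ) = - g τ := by
      intro τ
      simp only [hgdef]
      rw [hcbar, hfbar]
      ring
    obtain ⟨τ₀, hτ₀⟩ := Finite.exists_max fun τ : O.K => ‖g τ‖
    have hstep : ∀ τ : O.K, ‖g τ‖ = ‖g τ₀‖ →
        ∀ τ', Y.eta τ τ' ≠ 0 → (Y.eta τ τ' : ℂ) * g τ' = g τ := by
      intro τ hτ τ' hτ'
      refine max_principle (Y.nbhdFinite τ).toFinset
        (fun τ'' => (Y.eta τ τ'' : ℂ) * g τ'') (g τ)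
        ?_ (hkey τ) τ' (by rw [Set.Finite.mem_toFinset]; exact hτ')
      intro i hi
      rw [Set.Finite.mem_toFinset] at hi
      rw [norm_mul, hetaabs _ _ hi, one_mul, hτ]
      exact hτ₀ i
    have habsM : ∀ τ : O.K, ‖g τ‖ = ‖g τ₀‖ := by
      intro τ
      by_cases h1 : τ = τ₀
      · rw [h1]
      by_cases h2 : τ = O.bar τ₀
      · rw [h2, hgbar, norm_neg]
      have hpath := hconn τ₀ τ h1 h2
      clear h1 h2
      induction hpath with
      | refl => rfl
      | @tail b c hab hbc ih =>
        have hc := hstep _ ih _ hbc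
        have h3 := congrArg norm hc
        rw [norm_mul, hetaabs _ _ hbc, one_mul] at h3
        rw [h3]
        exact ih
    have hedge : ∀ a b : O.K, Y.eta a b ≠ 0 → (Y.eta a b : ℂ) * g b = g a :=
      fun a b h => hstep a (habsM a) b h
    have hMne : ‖g τ₀‖ ≠ 0 := by
      intro hM
      apply hf0
      funext τ
      have h1 : ‖g τ‖ = 0 :=
        le_antisymm (by rw [← hM]; exact hτ₀ τ) (norm_nonneg _)
      have h2 : g τ = 0 := by rwa [norm_eq_zero] at h1
      simp only [hgdef] at h2
      rcases mul_eq_zero.mp h2 with h|h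
      · exact absurd h (hcne τ)
      · exact h
    have hz : g τ₀ ≠ 0 := fun h => hMne (by rw [h]; simp)
    have hval : ∀ τ : O.K, g τ = g τ₀ ∨ g τ = - g τ₀ := by
      intro τ
      by_cases h1 : τ = τ₀
      · left; rw [h1]
      by_cases h2 : τ = O.bar τ₀
      · right; rw [h2, hgbar]
      have hpath := hconn τ₀ τ h1 h2
      clear h1 h2
      induction hpath with
      | refl => left; rfl
      | @tail b c hab hbc ih =>
        have hc := hedge _ _ hbc
        rcases Y.eta_vals b c with h|h|h
        · exact absurd h hbc
        · rw [h] at hc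
          push_cast at hc
          rw [one_mul] at hc
          rcases ih with h'|h'
          · left; rw [hc, h']
          · right; rw [hc, h']
        · rw [h] at hc
          push_cast at hc
          have hc' : g c = - g b := by linear_combination - hc
          rcases ih with h'|h'
          · right; rw [hc', h']
          · left; rw [hc', h', neg_neg]
    refine ⟨{τ | g τ = g τ₀}, ?_, ?_⟩
    · intro τ
      simp only [Set.mem_setOf_eq]
      constructor
      · intro h hbar
        rw [hgbar, h] at hbar
        exact hz (by linear_combination (-1/2 : ℂ) * hbar)
      · intro h
        rcases hval τ with h'|h'
        · exact h'
        · exact absurd (by rw [hgbar, h', neg_neg]) h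
    · intro σ₁ h₁ σ₂ h₂ hne12 hnb μ hμ₁ hμ₂
      rw [Set.mem_setOf_eq] at h₁ h₂
      have hη : Y.eta σ₁ σ₂ ≠ 0 := (hY.1 σ₁ σ₂).mpr ⟨hne12, hnb, μ, hμ₁, hμ₂⟩
      have hc := hedge σ₁ σ₂ hη
      rw [h₁, h₂] at hc
      have hη1 : (Y.eta σ₁ σ₂ : ℂ) = 1 :=
        mul_right_cancel₀ hz (hc.trans (one_mul (g τ₀)).symm)
      have hη1' : Y.eta σ₁ σ₂ = 1 := by exact_mod_cast hη1
      rw [← hY.2 σ₁ σ₂ μ hne12 hnb hμ₁ hμ₂]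
      exact hη1'
  · rintro ⟨A, hA, hTNC⟩
    have hA' : ∀ τ, τ ∉ A → O.bar τ ∈ A := by
      intro τ h
      by_contra h'
      exact h ((hA τ).mpr h')
    set s : O.K → ℝ := fun τ => if τ ∈ A then 1 else -1 with hsdef
    have hsedge : ∀ a b : O.K, Y.eta a b ≠ 0 → Y.eta a b * s b = s a := by
      intro a b h
      obtain ⟨hab, habb, μ, hμa, hμb⟩ := (hY.1 a b).mp h
      have hbarinj : O.bar a ≠ O.bar b :=
        fun he => hab (by rw [← O.bar_invol a, he, O.bar_invol])
      by_cases ha : a ∈ A <;> by_cases hb : b ∈ A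
      · have h1 := hTNC a ha b hb hab habb μ hμa hμb
        have h2 := hY.2 a b μ hab habb hμa hμb
        simp only [hsdef, if_pos ha, if_pos hb, mul_one]
        rw [h2]
        exact h1
      · have hbb : O.bar b ∈ A := hA' b hb
        have h1 := hTNC a ha (O.bar b) hbb habb
          (by rw [O.bar_invol]; exact hab) μ hμa
          (by rw [P.sgn_bar_left]; exact neg_ne_zero.mpr hμb)
        rw [P.sgn_bar_left] at h1
        have h2 := hY.2 a b μ hab habb hμa hμb
        simp only [hsdef, if_pos ha, if_neg hb]
        rw [h2]
        linear_combination h1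
      · have hba : O.bar a ∈ A := hA' a ha
        have h1 := hTNC (O.bar a) hba b hb
          (fun he => habb (by rw [← he, O.bar_invol]))
          hbarinj μ
          (by rw [P.sgn_bar_left]; exact neg_ne_zero.mpr hμa) hμb
        rw [P.sgn_bar_left] at h1
        have h2 := hY.2 a b μ hab habb hμa hμb
        simp only [hsdef, if_neg ha, if_pos hb]
        rw [h2]
        linear_combination - h1
      · have hba : O.bar a ∈ A := hA' a ha
        have hbb : O.bar b ∈ A := hA' b hb
        have h1 := hTNC (O.bar a) hba (O.bar b) hbb hbarinj
          (by rw [O.bar_invol]; exact fun he => habb (by rw [← he, O.bar_invol])) μ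
          (by rw [P.sgn_bar_left]; exact neg_ne_zero.mpr hμa)
          (by rw [P.sgn_bar_left]; exact neg_ne_zero.mpr hμb)
        rw [P.sgn_bar_left, P.sgn_bar_left] at h1
        have h2 := hY.2 a b μ hab habb hμa hμb
        simp only [hsdef, if_neg ha, if_neg hb]
        rw [h2]
        linear_combination - h1
    refine ⟨fun τ => ((Real.sqrt ((Y.mult:ℝ) * (Y.deg τ:ℝ)) : ℝ) : ℂ) * ((s τ : ℝ) : ℂ),
      ?_, ?_⟩
    · intro h
      obtain ⟨τ⟩ := hne
      have h1 := congrFun h τ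
      have hsne : ((s τ : ℝ) : ℂ) ≠ 0 := by
        simp only [hsdef]
        by_cases hτA : τ ∈ A <;> simp [hτA]
      exact (mul_ne_zero (hrC τ) hsne) h1
    · funext τ
      rw [disc_apply']
      show Y.c τ * ∑ τ' ∈ (Y.nbhdFinite τ).toFinset, (Y.eta τ τ' : ℂ) *
          (Y.c τ' * (((Real.sqrt ((Y.mult:ℝ) * (Y.deg τ':ℝ)) : ℝ) : ℂ) * ((s τ' : ℝ) : ℂ)))
          = ((Real.sqrt ((Y.mult:ℝ) * (Y.deg τ:ℝ)) : ℝ) : ℂ) * ((s τ : ℝ) : ℂ)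
      have hsum : ∑ τ' ∈ (Y.nbhdFinite τ).toFinset, (Y.eta τ τ' : ℂ) *
          (Y.c τ' * (((Real.sqrt ((Y.mult:ℝ) * (Y.deg τ':ℝ)) : ℝ) : ℂ) * ((s τ' : ℝ) : ℂ)))
          = ∑ τ' ∈ (Y.nbhdFinite τ).toFinset, ((s τ : ℝ) : ℂ) := by
        refine Finset.sum_congr rfl fun τ' hτ' => ?_
        rw [Set.Finite.mem_toFinset] at hτ'
        rw [hcdef, ← mul_assoc ((((Real.sqrt ((Y.mult:ℝ) * (Y.deg τ':ℝ)) : ℝ) : ℂ))⁻¹),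
          inv_mul_cancel₀ (hrC τ'), one_mul]
        have h5 := hsedge τ τ' hτ'
        push_cast [← h5]
        ring
      rw [hsum, Finset.sum_const, nsmul_eq_mul, hcardC, hcdef, ← hrr τ, mul_assoc,
        inv_mul_cancel_left₀ (hrC τ)]
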